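/- Let a = 2. If k is a nonnegative integer such that 2^k ≤ c and d ≥ 1 + 2^n·(c − 2^k), then s_{n+k} = (s_0 + 2 + 2^n·(c − 2^k))·s_0 + (d − 1 − 2^n·(c − 2^k))·s_1, where both coefficients are nonnegative and their sum is 1 + c·2^n. -/
import Mathlib


/-- case `a = 2`: if `2^k ≤ c` and `d ≥ 1 + 2^n·(c − 2^k)`, then
`s_{n+k} = (s_0 + 2 + 2^n·(c − 2^k))·s_0 + (d − 1 − 2^n·(c − 2^k))·s_1`, where
both coefficients are nonnegative and their sum is `1 + c·2^n`. -/
theorem stmt_6 (c d n : ℕ) (hc : 0 < c) (hd : 0 < d) (hdca : d < 2 * c)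
    (hdodd : Odd d) (hdc : Nat.Coprime d c) (hn : 0 < n)
    (s : ℕ → ℕ) (hs : ∀ j, s j = c * 2 ^ (n + j) - d)
    (k : ℕ) (hk : 2 ^ k ≤ c) (hdk : (d : ℤ) ≥ 1 + 2 ^ n * ((c : ℤ) - 2 ^ k)) :
    (s (n + k) : ℤ) =
        ((s 0 : ℤ) + 2 + 2 ^ n * ((c : ℤ) - 2 ^ k)) * (s 0 : ℤ) +
          ((d : ℤ) - 1 - 2 ^ n * ((c : ℤ) - 2 ^ k)) * (s 1 : ℤ) ∧
      0 ≤ (s 0 : ℤ) + 2 + 2 ^ n * ((c : ℤ) - 2 ^ k) ∧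
      0 ≤ (d : ℤ) - 1 - 2 ^ n * ((c : ℤ) - 2 ^ k) ∧
      ((s 0 : ℤ) + 2 + 2 ^ n * ((c : ℤ) - 2 ^ k)) +
          ((d : ℤ) - 1 - 2 ^ n * ((c : ℤ) - 2 ^ k)) = 1 + c * 2 ^ n := by
  have hle : ∀ j, d ≤ c * 2 ^ (n + j) := by
    intro j
    calc d ≤ 2 * c := hdca.le
    _ ≤ c * 2 ^ (n + j) := by
      rw [mul_comm]
      exact Nat.mul_le_mul_left c (by
        calc 2 = 2 ^ 1 := rfl
        _ ≤ 2 ^ (n + j) := Nat.pow_le_pow_right (by norm_num) (by omega))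
  have hcast : ∀ j, (s j : ℤ) = c * 2 ^ (n + j) - d := by
    intro j
    rw [hs j]
    push_cast [hle j]
    ring
  have hE : (2:ℤ) ^ k ≤ c := by exact_mod_cast hk
  have hs0 : (s 0 : ℤ) = c * 2 ^ n - d := by rw [hcast 0]; ring_nf
  have hs1 : (s 1 : ℤ) = c * 2 ^ (n + 1) - d := hcast 1
  refine ⟨?_, ?_, by linarith, ?_⟩
  · rw [hcast (n + k), hs0, hs1]
    ring_nf
  · have h0 : (0:ℤ) ≤ (s 0 : ℤ) := Int.natCast_nonneg _
    nlinarith [pow_pos (show (0:ℤ) < 2 by norm_num) n]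
  · rw [hs0]; ring
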